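/- Let $d = 3$, $\gamma > 0$, and $|\psi_\gamma\rangle = \tfrac{1}{\sqrt{2+\gamma^2}}(|00\rangle + \gamma|11\rangle + |22\rangle) \in \mathbb{C}^3 \otimes \mathbb{C}^3$. Define the measurement eigenvectors $|a\rangle_x = \tfrac{1}{\sqrt{3}} \sum_{k=0}^{2} e^{2\pi i k (a - \theta_x)/3} |k\rangle$ and $|b\rangle_y = \tfrac{1}{\sqrt{3}} \sum_{k=0}^{2} e^{2\pi i k (-b + \zeta_y)/3} |k\rangle$ for $a, b \in \{0,1,2\}$, with $\theta_1 = 1/4$, $\theta_2 = 3/4$, $\zeta_1 = 1/2$, $\zeta_2 = 1$, and set $p(ab|xy) = |(\langle a|_x \otimes \langle b|_y)\,|\psi_\gamma\rangle|^2$. Then for every $\xi \in \mathbb{R}$ the Bell expression $I_3(\xi) := P(A_1 = B_1) + P(A_2 = B_2) + P(A_1 = B_2 - 1) + P(A_2 = B_1) - \xi[P(A_1 = B_1 - 1) + P(A_2 = B_2 - 1) + P(A_1 = B_2) + P(A_2 = B_1 + 1)]$, where $P(A_x = B_y + k) := \sum_{a=0}^{2} p((a+k \bmod 3)\, a\, |xy)$,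 evaluates to $\mathcal{I}(\xi, \gamma) = \dfrac{4\big[3 + \gamma(2\sqrt{3} + \gamma - \xi\gamma)\big]}{3(2+\gamma^2)}$. -/

import Mathlib

noncomputable section

lemma abs_core (γ φ : ℝ) :
    ‖1 + (γ:ℂ) * Complex.exp (Complex.I * (-(φ:ℂ))) +
      Complex.exp (Complex.I * (-(2*(φ:ℂ))))‖ = |γ + 2 * Real.cos φ| := by
  have h1 : ‖Complex.exp (Complex.I * (φ:ℂ))‖ = 1 := by
    rw [mul_comm]
    exact Complex.norm_exp_ofReal_mul_I φ
  have key : Complex.exp (Complex.I * (φ:ℂ)) *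
      (1 + (γ:ℂ) * Complex.exp (Complex.I * (-(φ:ℂ))) +
        Complex.exp (Complex.I * (-(2*(φ:ℂ))))) = ((γ + 2 * Real.cos φ : ℝ) : ℂ) := by
    have e0 : Complex.exp (Complex.I * (φ:ℂ)) * Complex.exp (Complex.I * (-(φ:ℂ))) = 1 := by
      rw [← Complex.exp_add]
      norm_num
    have e2 : Complex.exp (Complex.I * (φ:ℂ)) * Complex.exp (Complex.I * (-(2*(φ:ℂ)))) =
        Complex.exp (Complex.I * (-(φ:ℂ))) := by
      rw [← Complex.exp_add]; congr 1; ring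
    have hc : Complex.exp (Complex.I * (φ:ℂ)) + Complex.exp (Complex.I * (-(φ:ℂ)))
        = 2 * Complex.cos (φ:ℂ) := by
      rw [Complex.cos]
      field_simp
    calc Complex.exp (Complex.I * (φ:ℂ)) *
        (1 + (γ:ℂ) * Complex.exp (Complex.I * (-(φ:ℂ))) + Complex.exp (Complex.I * (-(2*(φ:ℂ)))))
        = Complex.exp (Complex.I * (φ:ℂ)) * 1
          + (γ:ℂ) * (Complex.exp (Complex.I * (φ:ℂ)) * Complex.exp (Complex.I * (-(φ:ℂ))))
          + Complex.exp (Complex.I * (φ:ℂ)) * Complex.exp (Complex.I * (-(2*(φ:ℂ)))) := by ring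
      _ = (γ:ℂ) + (Complex.exp (Complex.I * (φ:ℂ)) + Complex.exp (Complex.I * (-(φ:ℂ)))) := by
          rw [e0, e2]; ring
      _ = (γ:ℂ) + 2 * Complex.cos (φ:ℂ) := by rw [hc]
      _ = ((γ + 2 * Real.cos φ : ℝ) : ℂ) := by
          push_cast [Complex.ofReal_cos]
          ring
  have := congrArg (fun z : ℂ => ‖z‖) key
  rwa [norm_mul, h1, one_mul, Complex.norm_real, Real.norm_eq_abs] at this

lemma amp_eval (γ : ℝ) (hγ : 0 < γ) (a b : ℕ) (T Z : ℝ) :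
    ‖∑ k : Fin 3, ∑ k' : Fin 3,
      (starRingEnd ℂ) (Complex.exp (2 * (Real.pi : ℂ) * Complex.I * (k.val : ℂ) *
        ((a : ℂ) - (T : ℂ)) / 3) / (Real.sqrt 3 : ℂ)) *
      (starRingEnd ℂ) (Complex.exp (2 * (Real.pi : ℂ) * Complex.I * (k'.val : ℂ) *
        (-(b : ℂ) + (Z : ℂ)) / 3) / (Real.sqrt 3 : ℂ)) *
      (if k = k' then (if k = 1 then (γ : ℂ) else 1) / (Real.sqrt (2 + γ ^ 2) : ℂ) else 0)‖ ^ 2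
    = (γ + 2 * Real.cos (2 * Real.pi * ((a : ℝ) - b - T + Z) / 3)) ^ 2 / (9 * (2 + γ ^ 2)) := by
  have hD : (0:ℝ) < Real.sqrt (2 + γ ^ 2) := Real.sqrt_pos.mpr (by positivity)
  have h3 : (0:ℝ) < Real.sqrt 3 := Real.sqrt_pos.mpr (by norm_num)
  have h33 : ((Real.sqrt 3 : ℂ)) * (Real.sqrt 3 : ℂ) = 3 := by
    rw [← Complex.ofReal_mul, Real.mul_self_sqrt (by norm_num)]
    norm_num
  set φ : ℝ := 2 * Real.pi * ((a : ℝ) - b - T + Z) / 3 with hφ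
  have key : ∀ z : ℂ, (starRingEnd ℂ) z = -z →
      (starRingEnd ℂ) (Complex.exp z) = Complex.exp (-z) := fun z h => by
    rw [← Complex.exp_conj, h]
  have c1 : (starRingEnd ℂ) (Complex.exp (2 * (Real.pi:ℂ) * Complex.I * ((a:ℂ) - (T:ℂ)) / 3))
      = Complex.exp (-(2 * (Real.pi:ℂ) * Complex.I * ((a:ℂ) - (T:ℂ)) / 3)) := by
    apply key; simp [map_div₀, Complex.conj_I, map_ofNat]; ring_nf
  have c1' : (starRingEnd ℂ) (Complex.exp (2 * (Real.pi:ℂ) * Complex.I * (-(b:ℂ) + (Z:ℂ)) / 3))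
      = Complex.exp (-(2 * (Real.pi:ℂ) * Complex.I * (-(b:ℂ) + (Z:ℂ)) / 3)) := by
    apply key; simp [map_div₀, Complex.conj_I, map_ofNat]; ring_nf
  have c2 : (starRingEnd ℂ) (Complex.exp (2 * (Real.pi:ℂ) * Complex.I * 2 * ((a:ℂ) - (T:ℂ)) / 3))
      = Complex.exp (-(2 * (Real.pi:ℂ) * Complex.I * 2 * ((a:ℂ) - (T:ℂ)) / 3)) := by
    apply key; simp [map_div₀, Complex.conj_I, map_ofNat]; ring_nf
  have c2' : (starRingEnd ℂ) (Complex.exp (2 * (Real.pi:ℂ) * Complex.I * 2 * (-(b:ℂ) + (Z:ℂ)) / 3))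
      = Complex.exp (-(2 * (Real.pi:ℂ) * Complex.I * 2 * (-(b:ℂ) + (Z:ℂ)) / 3)) := by
    apply key; simp [map_div₀, Complex.conj_I, map_ofNat]; ring_nf
  have m1 : Complex.exp (-(2 * (Real.pi:ℂ) * Complex.I * ((a:ℂ) - (T:ℂ)) / 3)) *
      Complex.exp (-(2 * (Real.pi:ℂ) * Complex.I * (-(b:ℂ) + (Z:ℂ)) / 3)) =
      Complex.exp (Complex.I * (-(φ:ℂ))) := by
    rw [← Complex.exp_add]; congr 1; rw [hφ]; push_cast; ring
  have m2 : Complex.exp (-(2 * (Real.pi:ℂ) * Complex.I * 2 * ((a:ℂ) - (T:ℂ)) / 3)) *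
      Complex.exp (-(2 * (Real.pi:ℂ) * Complex.I * 2 * (-(b:ℂ) + (Z:ℂ)) / 3)) =
      Complex.exp (Complex.I * (-(2*(φ:ℂ)))) := by
    rw [← Complex.exp_add]; congr 1; rw [hφ]; push_cast; ring
  simp only [Fin.sum_univ_three]
  norm_num [Fin.ext_iff]
  rw [c1, c1', c2, c2']
  have amp_eq :
      ((Real.sqrt 3 : ℂ))⁻¹ * ((Real.sqrt 3 : ℂ))⁻¹ * ((Real.sqrt (2 + γ ^ 2) : ℂ))⁻¹ +
        Complex.exp (-(2 * (Real.pi:ℂ) * Complex.I * ((a:ℂ) - (T:ℂ)) / 3)) / (Real.sqrt 3 : ℂ) *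
          (Complex.exp (-(2 * (Real.pi:ℂ) * Complex.I * (-(b:ℂ) + (Z:ℂ)) / 3)) / (Real.sqrt 3 : ℂ)) *
          ((γ:ℂ) / (Real.sqrt (2 + γ ^ 2) : ℂ)) +
        Complex.exp (-(2 * (Real.pi:ℂ) * Complex.I * 2 * ((a:ℂ) - (T:ℂ)) / 3)) / (Real.sqrt 3 : ℂ) *
          (Complex.exp (-(2 * (Real.pi:ℂ) * Complex.I * 2 * (-(b:ℂ) + (Z:ℂ)) / 3)) / (Real.sqrt 3 : ℂ)) *
          ((Real.sqrt (2 + γ ^ 2) : ℂ))⁻¹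
      = (1 + (γ:ℂ) * Complex.exp (Complex.I * (-(φ:ℂ))) +
          Complex.exp (Complex.I * (-(2*(φ:ℂ))))) / (3 * (Real.sqrt (2 + γ ^ 2) : ℂ)) := by
    rw [← m1, ← m2]
    have h3ne : (Real.sqrt 3 : ℂ) ≠ 0 := by
      exact_mod_cast Complex.ofReal_ne_zero.mpr (ne_of_gt h3)
    have hDne : (Real.sqrt (2 + γ ^ 2) : ℂ) ≠ 0 := by
      exact_mod_cast Complex.ofReal_ne_zero.mpr (ne_of_gt hD)
    field_simp
    ring_nf
    rw [show ((Real.sqrt 3 : ℝ) : ℂ) ^ 2 = 3 from by rw [sq]; exact h33]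
    ring
  rw [amp_eq, norm_div, abs_core]
  have : ‖3 * (Real.sqrt (2 + γ ^ 2) : ℂ)‖ = 3 * Real.sqrt (2 + γ ^ 2) := by
    rw [norm_mul, Complex.norm_real, Real.norm_eq_abs, abs_of_pos hD]
    norm_num
  rw [this, div_pow, sq_abs]
  congr 1
  rw [mul_pow, Real.sq_sqrt (by positivity)]
  ring



/-- The Bell expression `I₃(ξ)` evaluated on the partially entangled two-qutrit state
`|ψ_γ⟩ = (|00⟩ + γ|11⟩ + |22⟩)/√(2+γ²)` with the optimal CGLMP measurements
(eigenvectors `|a⟩ₓ`, `|b⟩_y` with phases `θ₁ = 1/4, θ₂ = 3/4, ζ₁ = 1/2, ζ₂ = 1`)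
equals `𝓘(ξ, γ) = 4[3 + γ(2√3 + γ - ξγ)] / (3(2+γ²))`. -/
theorem cglmp_family_quantum_value (γ : ℝ) (hγ : 0 < γ) (ξ : ℝ) :
    let θ : Fin 2 → ℝ := ![1 / 4, 3 / 4]
    let ζ : Fin 2 → ℝ := ![1 / 2, 1]
    let avec : Fin 2 → ZMod 3 → Fin 3 → ℂ := fun x a k =>
      Complex.exp (2 * (Real.pi : ℂ) * Complex.I * (k.val : ℂ) *
        ((a.val : ℂ) - (θ x : ℂ)) / 3) / (Real.sqrt 3 : ℂ)
    let bvec : Fin 2 → ZMod 3 → Fin 3 → ℂ := fun y b k =>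
      Complex.exp (2 * (Real.pi : ℂ) * Complex.I * (k.val : ℂ) *
        (-(b.val : ℂ) + (ζ y : ℂ)) / 3) / (Real.sqrt 3 : ℂ)
    let ψ : Fin 3 × Fin 3 → ℂ := fun kk =>
      if kk.1 = kk.2 then (if kk.1 = 1 then (γ : ℂ) else 1) / (Real.sqrt (2 + γ ^ 2) : ℂ)
      else 0
    let p : ZMod 3 → ZMod 3 → Fin 2 → Fin 2 → ℝ := fun a b x y =>
      ‖∑ k : Fin 3, ∑ k' : Fin 3,
        (starRingEnd ℂ) (avec x a k) * (starRingEnd ℂ) (bvec y b k') * ψ (k, k')‖ ^ 2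
    let Pk : Fin 2 → Fin 2 → ZMod 3 → ℝ := fun x y k => ∑ a : ZMod 3, p (a + k) a x y
    (Pk 0 0 0 + Pk 1 1 0 + Pk 0 1 (-1) + Pk 1 0 0) -
      ξ * (Pk 0 0 (-1) + Pk 1 1 (-1) + Pk 0 1 0 + Pk 1 0 1)
      = 4 * (3 + γ * (2 * Real.sqrt 3 + γ - ξ * γ)) / (3 * (2 + γ ^ 2)) := by
  intro θ ζ avec bvec ψ p Pk
  have zsum : ∀ f : ZMod 3 → ℝ, ∑ a : ZMod 3, f a = f 0 + f 1 + f 2 := by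
    intro f
    have : (Finset.univ : Finset (ZMod 3)) = {0, 1, 2} := by decide
    rw [this, Finset.sum_insert (by decide), Finset.sum_insert (by decide),
      Finset.sum_singleton, add_assoc]
  have hz : (ZMod.cast (3 : ZMod 3) : ℝ) = 0 := by
    rw [show (3 : ZMod 3) = 0 by decide]
    simp
  simp only [Pk, p, avec, bvec, ψ, θ, ζ, zsum, Matrix.cons_val_zero, Matrix.cons_val_one,
    Matrix.head_cons]
  simp only [amp_eval γ hγ]
  norm_num [show ((0:ZMod 3)+0).val = 0 from rfl, show ((1:ZMod 3)+0).val = 1 from rfl,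
    show ((2:ZMod 3)+0).val = 2 from rfl, show ((0:ZMod 3)+(-1)).val = 2 from rfl,
    show ((1:ZMod 3)+(-1)).val = 0 from rfl, show ((2:ZMod 3)+(-1)).val = 1 from rfl,
    show ((0:ZMod 3)+1).val = 1 from rfl, show ((1:ZMod 3)+1).val = 2 from rfl,
    show ((2:ZMod 3)+1).val = 0 from rfl, show (ZMod.val (0:ZMod 3)) = 0 from rfl,
    show (ZMod.val (1:ZMod 3)) = 1 from rfl, show (ZMod.val (2:ZMod 3)) = 2 from rfl,
    hz]
  have e1 : Real.cos (2 * Real.pi * (1 / 4) / 3) = Real.sqrt 3 / 2 := by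
    rw [show 2 * Real.pi * (1 / 4) / 3 = Real.pi / 6 by ring, Real.cos_pi_div_six]
  have e2 : Real.cos (2 * Real.pi * (11 / 4) / 3) = Real.sqrt 3 / 2 := by
    rw [show 2 * Real.pi * (11 / 4) / 3 = -(Real.pi / 6) + 2 * Real.pi by ring,
      Real.cos_add_two_pi, Real.cos_neg, Real.cos_pi_div_six]
  have e3 : Real.cos (-(2 * Real.pi * (1 / 4)) / 3) = Real.sqrt 3 / 2 := by
    rw [show -(2 * Real.pi * (1 / 4)) / 3 = -(Real.pi / 6) by ring, Real.cos_neg,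
      Real.cos_pi_div_six]
  have e4 : Real.cos (2 * Real.pi * (9 / 4) / 3) = 0 := by
    rw [show 2 * Real.pi * (9 / 4) / 3 = -(Real.pi / 2) + 2 * Real.pi by ring,
      Real.cos_add_two_pi, Real.cos_neg, Real.cos_pi_div_two]
  have e5 : Real.cos (-(2 * Real.pi * (3 / 4)) / 3) = 0 := by
    rw [show -(2 * Real.pi * (3 / 4)) / 3 = -(Real.pi / 2) by ring, Real.cos_neg,
      Real.cos_pi_div_two]
  have e6 : Real.cos (2 * Real.pi * (3 / 4) / 3) = 0 := by
    rw [show 2 * Real.pi * (3 / 4) / 3 = Real.pi / 2 by ring, Real.cos_pi_div_two]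
  simp only [e1, e2, e3, e4, e5, e6]
  have hne : (2 + γ ^ 2) ≠ 0 := by positivity
  have h3 : Real.sqrt 3 ^ 2 = 3 := Real.sq_sqrt (by norm_num)
  field_simp
  ring_nf
  have e7 : Real.cos (Real.pi * (-3 / 2)) = 0 := by
    rw [show Real.pi * (-3 / 2) = Real.pi / 2 - 2 * Real.pi by ring, Real.cos_sub_two_pi,
      Real.cos_pi_div_two]
  simp only [e7, h3]
  ring

end
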